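/- Let I ⊆ ℝ be a nonempty open interval, let F : I → ℝ be affine on I, and let g1, g2 : I → ℝ be continuous functions strictly monotone in the same sense. Then (F,f1,f2,G,g1,g2) solves equation (1) if and only if there exist an additive function B : ℝ → ℝ and constants λ1, λ2 ∈ ℝ such that f_k(x) = -F(x)/2 + B(g_k(x)) + λ_k for all x ∈ I and k ∈ {1,2}, and G(u) = B(u) + λ1 + λ2 for all u ∈ g1(I)+g2(I). -/

import Mathlib

open Set Pointwise

/-- Equation (1): `F((x+y)/2) + f1(x) + f2(y) = G(g1(x) + g2(y))` for all `x, y ∈ I`. -/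
def SolvesEq1 (I : Set ℝ) (F f1 f2 G g1 g2 : ℝ → ℝ) : Prop :=
  ∀ x ∈ I, ∀ y ∈ I, F ((x + y) / 2) + f1 x + f2 y = G (g1 x + g2 y)

/-- `h` is affine on `U`: it satisfies Jensen's equation on `U`. -/
def AffineOn (h : ℝ → ℝ) (U : Set ℝ) : Prop :=
  ∀ u ∈ U, ∀ v ∈ U, h ((u + v) / 2) = (h u + h v) / 2


private lemma natMulAux (θ : ℝ → ℝ) (ε : ℝ)
    (locadd : ∀ s t : ℝ, |s| ≤ ε → |t| ≤ ε → θ (s + t) = θ s + θ t) :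
    ∀ (n : ℕ) (s : ℝ), |(n : ℝ) * s| ≤ ε → θ ((n : ℝ) * s) = n * θ s := by
  intro n
  induction n with
  | zero =>
    intro s h
    have h0 : |(0:ℝ)| ≤ ε := by simpa using h
    have := locadd 0 0 h0 h0
    simp at this ⊢
    linarith
  | succ n ih =>
    intro s h
    have hc1 : |((n+1 : ℕ) : ℝ)| = (n:ℝ) + 1 := by
      push_cast; rw [abs_of_nonneg (by positivity)]
    have hc2 : |(n : ℝ)| = (n:ℝ) := abs_of_nonneg (by positivity)
    have hs : |s| ≤ ε := by
      rw [abs_mul, hc1] at h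
      nlinarith [abs_nonneg s]
    have hns : |(n : ℝ) * s| ≤ ε := by
      rw [abs_mul, hc1] at h
      rw [abs_mul, hc2]
      nlinarith [abs_nonneg s]
    have key : θ ((n : ℝ) * s + s) = θ ((n:ℝ)*s) + θ s := locadd _ _ hns hs
    push_cast
    rw [show ((n:ℝ)+1) * s = (n:ℝ)*s + s by ring, key, ih s hns]
    ring

private lemma existsBAux (θ : ℝ → ℝ) (ε : ℝ) (hε : 0 < ε)
    (locadd : ∀ s t : ℝ, |s| ≤ ε → |t| ≤ ε → θ (s + t) = θ s + θ t) :
    ∃ B : ℝ → ℝ, (∀ s t : ℝ, B (s + t) = B s + B t) ∧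
      ∀ (x : ℝ) (n : ℕ), 0 < n → |x / n| ≤ ε → B x = n * θ (x / n) := by
  have L := natMulAux θ ε locadd
  set N : ℝ → ℕ := fun x => ⌈|x| / ε⌉₊ + 1 with hN
  have hNpos : ∀ x, 0 < N x := fun x => Nat.succ_pos _
  have hNle : ∀ x, |x / (N x : ℝ)| ≤ ε := by
    intro x
    rw [abs_div, abs_of_nonneg (by positivity : (0:ℝ) ≤ (N x : ℝ))]
    rw [div_le_iff₀ (by positivity)]
    have h1 : |x| / ε ≤ (⌈|x| / ε⌉₊ : ℝ) := Nat.le_ceil _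
    have h2 : (⌈|x| / ε⌉₊ : ℝ) ≤ (N x : ℝ) := by
      simp only [hN]; push_cast; linarith
    calc |x| = (|x| / ε) * ε := by field_simp
    _ ≤ (N x : ℝ) * ε := by nlinarith
    _ = ε * (N x : ℝ) := by ring
  have W : ∀ (x : ℝ) (n m : ℕ), 0 < n → 0 < m → |x / n| ≤ ε → |x / m| ≤ ε →
      (n : ℝ) * θ (x / n) = (m : ℝ) * θ (x / m) := by
    intro x n m hn hm hxn hxm
    have hnR : (0:ℝ) < (n:ℝ) := by exact_mod_cast hn
    have hmR : (0:ℝ) < (m:ℝ) := by exact_mod_cast hm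
    have e1 : x / n = (m : ℝ) * (x / ((n:ℝ) * m)) := by field_simp
    have e2 : x / m = (n : ℝ) * (x / ((n:ℝ) * m)) := by field_simp
    have t1 : θ (x / n) = (m:ℝ) * θ (x / ((n:ℝ)*m)) := by
      rw [e1]; exact L m _ (by rw [← e1]; exact hxn)
    have t2 : θ (x / m) = (n:ℝ) * θ (x / ((n:ℝ)*m)) := by
      rw [e2]; exact L n _ (by rw [← e2]; exact hxm)
    rw [t1, t2]; ring
  refine ⟨fun x => (N x : ℝ) * θ (x / N x), ?_, ?_⟩
  · intro s t
    dsimp only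
    set n : ℕ := N s + N t + N (s + t) with hn
    have hnpos : 0 < n := by positivity
    have hge : ∀ y : ℝ, N y ≤ n → |y / (n:ℝ)| ≤ ε := by
      intro y hy
      rw [abs_div, abs_of_nonneg (by positivity : (0:ℝ) ≤ (n:ℝ))]
      have h1 := hNle y
      rw [abs_div, abs_of_nonneg (by positivity : (0:ℝ) ≤ (N y : ℝ))] at h1
      have : |y| / (n:ℝ) ≤ |y| / (N y : ℝ) := by
        apply div_le_div_of_nonneg_left (abs_nonneg y) (by exact_mod_cast hNpos y)
        exact_mod_cast hy
      linarith
    have hs' : |s / (n:ℝ)| ≤ ε := hge s (by omega)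
    have ht' : |t / (n:ℝ)| ≤ ε := hge t (by omega)
    have hst' : |(s+t) / (n:ℝ)| ≤ ε := hge (s+t) (by omega)
    have e1 : (N (s+t) : ℝ) * θ ((s+t) / N (s+t)) = (n:ℝ) * θ ((s+t)/n) :=
      W (s+t) _ n (hNpos _) hnpos (hNle _) hst'
    have e2 : (N s : ℝ) * θ (s / N s) = (n:ℝ) * θ (s/n) :=
      W s _ n (hNpos _) hnpos (hNle _) hs'
    have e3 : (N t : ℝ) * θ (t / N t) = (n:ℝ) * θ (t/n) :=
      W t _ n (hNpos _) hnpos (hNle _) ht'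
    rw [e1, e2, e3, show (s+t)/(n:ℝ) = s/n + t/n by ring, locadd _ _ hs' ht']
    ring
  · intro x n hn hxn
    exact W x (N x) n (hNpos x) hn (hNle x) hxn

private lemma teleAux (J : Set ℝ) (hJ : J.OrdConnected) (ψ θ B : ℝ → ℝ) (δ ε : ℝ)
    (hε : 0 < ε) (hεδ : ε ≤ δ)
    (inc : ∀ t : ℝ, |t| ≤ δ → ∀ u ∈ J, u + t ∈ J → ψ (u + t) - ψ u = θ t)
    (hB : ∀ (x : ℝ) (n : ℕ), 0 < n → |x / n| ≤ ε → B x = n * θ (x / n)) :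
    ∀ u ∈ J, ∀ u' ∈ J, ψ u' - ψ u = B (u' - u) := by
  intro u hu u' hu'
  obtain ⟨n, hnpos, hdn⟩ : ∃ n : ℕ, 0 < n ∧ |(u' - u) / (n:ℝ)| ≤ ε := by
    refine ⟨⌈|u' - u| / ε⌉₊ + 1, Nat.succ_pos _, ?_⟩
    have hnR : (0:ℝ) < ((⌈|u' - u| / ε⌉₊ + 1 : ℕ) : ℝ) := by positivity
    rw [abs_div, abs_of_nonneg hnR.le, div_le_iff₀ hnR]
    have h1 : |u' - u| / ε ≤ (⌈|u' - u| / ε⌉₊ : ℝ) := Nat.le_ceil _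
    have h2 : (⌈|u' - u| / ε⌉₊ : ℝ) ≤ ((⌈|u' - u| / ε⌉₊ + 1 : ℕ) : ℝ) := by
      push_cast; linarith
    calc |u' - u| = (|u' - u| / ε) * ε := by field_simp
    _ ≤ ((⌈|u' - u| / ε⌉₊ + 1 : ℕ) : ℝ) * ε := by nlinarith
    _ = ε * ((⌈|u' - u| / ε⌉₊ + 1 : ℕ) : ℝ) := by ring
  have hnR : (0:ℝ) < (n:ℝ) := by exact_mod_cast hnpos
  have hmem : ∀ k : ℕ, k ≤ n → u + (k:ℝ) * ((u' - u) / n) ∈ J := by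
    intro k hk
    apply hJ.uIcc_subset hu hu'
    rw [Set.mem_uIcc]
    have hc0 : (0:ℝ) ≤ (k:ℝ) / n := by positivity
    have hc1 : (k:ℝ) / n ≤ 1 := by
      rw [div_le_one hnR]; exact_mod_cast hk
    have hz : u + (k:ℝ) * ((u' - u) / n) = u + ((k:ℝ)/n) * (u' - u) := by ring
    rw [hz]
    rcases le_total u u' with hd0 | hd0
    · left; constructor <;> nlinarith
    · right; constructor <;> nlinarith
  have C : ∀ k : ℕ, k ≤ n → ψ (u + (k:ℝ) * ((u' - u)/n)) - ψ u = (k:ℝ) * θ ((u' - u)/n) := by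
    intro k
    induction k with
    | zero => intro _; simp
    | succ k ih =>
      intro hk
      have hk' : k ≤ n := by omega
      have step : ψ (u + (k:ℝ) * ((u' - u)/n) + (u' - u)/n) - ψ (u + (k:ℝ) * ((u' - u)/n))
          = θ ((u' - u)/n) := by
        apply inc _ (le_trans hdn hεδ) _ (hmem k hk')
        have e : u + (k:ℝ) * ((u' - u)/n) + (u' - u)/n = u + (((k:ℕ)+1 : ℕ):ℝ) * ((u' - u)/n) := by
          push_cast; ring
        rw [e]
        exact hmem (k+1) hk
      have e : u + (((k:ℕ)+1 : ℕ) : ℝ) * ((u' - u)/n)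
          = u + (k:ℝ)*((u' - u)/n) + (u' - u)/n := by push_cast; ring
      rw [e]
      have := ih hk'
      push_cast
      linarith
  have hfin := C n le_rfl
  have hnh : u + (n:ℝ) * ((u' - u)/n) = u' := by field_simp; ring
  rw [hnh] at hfin
  rw [hB (u' - u) n hnpos hdn]
  exact hfin

/-- If `F` is affine on `I` and `g1, g2` are continuous and strictly
monotone in the same sense, then `(F,f1,f2,G,g1,g2)` solves equation (1) if and only if
there exist an additive `B : ℝ → ℝ` and constants `λ1, λ2 ∈ ℝ` such that
`f_k = -F/2 + B ∘ g_k + λ_k` on `I` and `G = B + λ1 + λ2` on `g1(I) + g2(I)`. -/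
theorem stmt5
    (I : Set ℝ) (hIo : IsOpen I) (hIc : I.OrdConnected) (hIne : I.Nonempty)
    (F f1 f2 G g1 g2 : ℝ → ℝ)
    (hFaff : AffineOn F I)
    (hg1c : ContinuousOn g1 I) (hg2c : ContinuousOn g2 I)
    (hmono : (StrictMonoOn g1 I ∧ StrictMonoOn g2 I) ∨
             (StrictAntiOn g1 I ∧ StrictAntiOn g2 I)) :
    SolvesEq1 I F f1 f2 G g1 g2 ↔
      ∃ B : ℝ → ℝ, (∀ s t : ℝ, B (s + t) = B s + B t) ∧
        ∃ lam1 lam2 : ℝ,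
          (∀ x ∈ I, f1 x = -F x / 2 + B (g1 x) + lam1 ∧
                    f2 x = -F x / 2 + B (g2 x) + lam2) ∧
          (∀ w ∈ g1 '' I + g2 '' I, G w = B w + lam1 + lam2) := by
  constructor
  · intro heq
    have hg1inj : Set.InjOn g1 I := hmono.elim (fun h => h.1.injOn) (fun h => h.1.injOn)
    have hg2inj : Set.InjOn g2 I := hmono.elim (fun h => h.2.injOn) (fun h => h.2.injOn)
    have hJ1oc : (g1 '' I).OrdConnected := (hIc.isPreconnected.image g1 hg1c).ordConnected
    have hJ2oc : (g2 '' I).OrdConnected := (hIc.isPreconnected.image g2 hg2c).ordConnected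
    obtain ⟨x0, hx0⟩ := hIne
    obtain ⟨r, hr, hball⟩ := Metric.isOpen_iff.mp hIo x0 hx0
    have hbI : x0 + r / 2 ∈ I := by
      apply hball
      rw [Metric.mem_ball, Real.dist_eq]
      rw [show x0 + r/2 - x0 = r/2 by ring, abs_of_nonneg (by linarith)]
      linarith
    have hab : x0 < x0 + r / 2 := by linarith
    -- key equation
    have hkey : ∀ x ∈ I, ∀ y ∈ I,
        (f1 x + F x / 2) + (f2 y + F y / 2) = G (g1 x + g2 y) := by
      intro x hx y hy
      have hF := hFaff x hx y hy
      have h := heq x hx y hy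
      linarith
    -- ψ functions
    obtain ⟨ψ1, hψ1⟩ : ∃ ψ : ℝ → ℝ, ψ = fun u =>
      f1 (Function.invFunOn g1 I u) + F (Function.invFunOn g1 I u) / 2 := ⟨_, rfl⟩
    obtain ⟨ψ2, hψ2⟩ : ∃ ψ : ℝ → ℝ, ψ = fun v =>
      f2 (Function.invFunOn g2 I v) + F (Function.invFunOn g2 I v) / 2 := ⟨_, rfl⟩
    have hφ1 : ∀ x ∈ I, ψ1 (g1 x) = f1 x + F x / 2 := by
      intro x hx
      have h : Function.invFunOn g1 I (g1 x) = x := hg1inj.leftInvOn_invFunOn hx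
      simp only [hψ1, h]
    have hφ2 : ∀ x ∈ I, ψ2 (g2 x) = f2 x + F x / 2 := by
      intro x hx
      have h : Function.invFunOn g2 I (g2 x) = x := hg2inj.leftInvOn_invFunOn hx
      simp only [hψ2, h]
    have P : ∀ u ∈ g1 '' I, ∀ v ∈ g2 '' I, ψ1 u + ψ2 v = G (u + v) := by
      intro u hu v hv
      rw [Set.mem_image] at hu hv
      have hxu : Function.invFunOn g1 I u ∈ I := Function.invFunOn_mem hu
      have hgu : g1 (Function.invFunOn g1 I u) = u := Function.invFunOn_eq hu
      have hxv : Function.invFunOn g2 I v ∈ I := Function.invFunOn_mem hv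
      have hgv : g2 (Function.invFunOn g2 I v) = v := Function.invFunOn_eq hv
      have h := hkey _ hxu _ hxv
      rw [hgu, hgv] at h
      simp only [hψ1, hψ2]
      exact h
    -- two distinct points in each image
    obtain ⟨p1, q1, hp1, hq1, hpq1⟩ : ∃ p q, p ∈ g1 '' I ∧ q ∈ g1 '' I ∧ p < q := by
      have hne : g1 x0 ≠ g1 (x0 + r/2) := fun h => absurd (hg1inj hx0 hbI h) (ne_of_lt hab)
      rcases lt_or_gt_of_ne hne with h | h
      · exact ⟨_, _, mem_image_of_mem _ hx0, mem_image_of_mem _ hbI, h⟩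
      · exact ⟨_, _, mem_image_of_mem _ hbI, mem_image_of_mem _ hx0, h⟩
    obtain ⟨p2, q2, hp2, hq2, hpq2⟩ : ∃ p q, p ∈ g2 '' I ∧ q ∈ g2 '' I ∧ p < q := by
      have hne : g2 x0 ≠ g2 (x0 + r/2) := fun h => absurd (hg2inj hx0 hbI h) (ne_of_lt hab)
      rcases lt_or_gt_of_ne hne with h | h
      · exact ⟨_, _, mem_image_of_mem _ hx0, mem_image_of_mem _ hbI, h⟩
      · exact ⟨_, _, mem_image_of_mem _ hbI, mem_image_of_mem _ hx0, h⟩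
    set δ1 : ℝ := (q1 - p1) / 2 with hδ1def
    set δ2 : ℝ := (q2 - p2) / 2 with hδ2def
    have hδ1 : 0 < δ1 := by rw [hδ1def]; linarith
    have hδ2 : 0 < δ2 := by rw [hδ2def]; linarith
    set δ : ℝ := min δ1 δ2 with hδdef
    have hδ : 0 < δ := lt_min hδ1 hδ2
    have hδle1 : δ ≤ δ1 := min_le_left _ _
    have hδle2 : δ ≤ δ2 := min_le_right _ _
    set ε : ℝ := δ / 2 with hεdef
    have hε : 0 < ε := by rw [hεdef]; linarith
    have hεδ : ε ≤ δ := by rw [hεdef]; linarith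
    set m1 : ℝ := (p1 + q1) / 2 with hm1def
    set m2 : ℝ := (p2 + q2) / 2 with hm2def
    have hIcc1 : Set.Icc p1 q1 ⊆ g1 '' I := hJ1oc.out hp1 hq1
    have hIcc2 : Set.Icc p2 q2 ⊆ g2 '' I := hJ2oc.out hp2 hq2
    have hm1mem : ∀ t : ℝ, |t| ≤ δ1 → m1 + t ∈ g1 '' I := by
      intro t ht
      rw [abs_le] at ht
      apply hIcc1
      rw [Set.mem_Icc, hm1def]
      constructor <;> [linarith [ht.1]; linarith [ht.2]]
    have hm2mem : ∀ t : ℝ, |t| ≤ δ2 → m2 + t ∈ g2 '' I := by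
      intro t ht
      rw [abs_le] at ht
      apply hIcc2
      rw [Set.mem_Icc, hm2def]
      constructor <;> [linarith [ht.1]; linarith [ht.2]]
    obtain ⟨θ, hθdef⟩ : ∃ θ : ℝ → ℝ, θ = fun t => ψ1 (m1 + t / 2) - ψ1 (m1 - t / 2) :=
      ⟨_, rfl⟩
    have habs2 : ∀ t : ℝ, |t / 2| = |t| / 2 := by
      intro t; rw [abs_div, abs_two]
    -- increment lemma for ψ2
    have inc2 : ∀ t : ℝ, |t| ≤ δ → ∀ v ∈ g2 '' I, v + t ∈ g2 '' I →
        ψ2 (v + t) - ψ2 v = θ t := by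
      intro t ht v hv hvt
      have h1 : m1 + t / 2 ∈ g1 '' I := hm1mem (t/2) (by rw [habs2]; linarith)
      have h2 : m1 - t / 2 ∈ g1 '' I := by
        have := hm1mem (-(t/2)) (by rw [abs_neg, habs2]; linarith)
        rwa [show m1 + -(t/2) = m1 - t/2 by ring] at this
      have e1 := P _ h2 _ hvt
      have e2 := P _ h1 _ hv
      rw [show m1 - t/2 + (v + t) = m1 + t/2 + v by ring] at e1
      simp only [hθdef]
      linarith
    -- increment lemma for ψ1
    have inc1 : ∀ t : ℝ, |t| ≤ δ → ∀ u ∈ g1 '' I, u + t ∈ g1 '' I →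
        ψ1 (u + t) - ψ1 u = θ t := by
      intro t ht u hu hut
      have h1 : m2 + t / 2 ∈ g2 '' I := hm2mem (t/2) (by rw [habs2]; linarith)
      have h2 : m2 - t / 2 ∈ g2 '' I := by
        have := hm2mem (-(t/2)) (by rw [abs_neg, habs2]; linarith)
        rwa [show m2 + -(t/2) = m2 - t/2 by ring] at this
      have e3 : ψ2 (m2 + t / 2) - ψ2 (m2 - t / 2) = θ t := by
        have h := inc2 t ht (m2 - t/2) h2
          (by rw [show m2 - t/2 + t = m2 + t/2 by ring]; exact h1)
        rwa [show m2 - t/2 + t = m2 + t/2 by ring] at h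
      have e1 := P _ hut _ h2
      have e2 := P _ hu _ h1
      rw [show u + t + (m2 - t/2) = u + (m2 + t/2) by ring] at e1
      linarith
    -- local additivity of θ
    have locadd : ∀ s t : ℝ, |s| ≤ ε → |t| ≤ ε → θ (s + t) = θ s + θ t := by
      intro s t hs ht
      rw [abs_le] at hs ht
      have hu : m1 - (s + t) / 2 ∈ g1 '' I := by
        have := hm1mem (-((s+t)/2)) (by rw [abs_le]; constructor <;> linarith)
        rwa [show m1 + -((s+t)/2) = m1 - (s+t)/2 by ring] at this
      have hus : m1 - (s + t) / 2 + s ∈ g1 '' I := by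
        have := hm1mem ((s - t)/2) (by rw [abs_le]; constructor <;> linarith)
        rwa [show m1 + (s-t)/2 = m1 - (s+t)/2 + s by ring] at this
      have hust : m1 - (s + t) / 2 + s + t ∈ g1 '' I := by
        have := hm1mem ((s + t)/2) (by rw [abs_le]; constructor <;> linarith)
        rwa [show m1 + (s+t)/2 = m1 - (s+t)/2 + s + t by ring] at this
      have A1 : ψ1 (m1 - (s+t)/2 + (s + t)) - ψ1 (m1 - (s+t)/2) = θ (s + t) := by
        apply inc1 (s + t) (by rw [abs_le]; constructor <;> linarith) _ hu
        rwa [show m1 - (s+t)/2 + (s+t) = m1 - (s+t)/2 + s + t by ring]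
      have A2 : ψ1 (m1 - (s+t)/2 + s) - ψ1 (m1 - (s+t)/2) = θ s :=
        inc1 s (by rw [abs_le]; constructor <;> linarith) _ hu hus
      have A3 : ψ1 (m1 - (s+t)/2 + s + t) - ψ1 (m1 - (s+t)/2 + s) = θ t :=
        inc1 t (by rw [abs_le]; constructor <;> linarith) _ hus hust
      rw [show m1 - (s+t)/2 + (s+t) = m1 - (s+t)/2 + s + t by ring] at A1
      linarith
    obtain ⟨B, hBadd, hBval⟩ := existsBAux θ ε hε locadd
    have T1 := teleAux (g1 '' I) hJ1oc ψ1 θ B δ ε hε hεδ inc1 hBval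
    have T2 := teleAux (g2 '' I) hJ2oc ψ2 θ B δ ε hε hεδ inc2 hBval
    have hBsub : ∀ a b : ℝ, B (a - b) = B a - B b := by
      intro a b
      have := hBadd (a - b) b
      rw [sub_add_cancel] at this
      linarith
    refine ⟨B, hBadd, ψ1 (g1 x0) - B (g1 x0), ψ2 (g2 x0) - B (g2 x0), ?_, ?_⟩
    · intro x hx
      have h1 := T1 (g1 x0) (mem_image_of_mem _ hx0) (g1 x) (mem_image_of_mem _ hx)
      have h2 := T2 (g2 x0) (mem_image_of_mem _ hx0) (g2 x) (mem_image_of_mem _ hx)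
      rw [hBsub] at h1 h2
      have e1 := hφ1 x hx
      have e2 := hφ2 x hx
      constructor <;> linarith
    · intro w hw
      rw [Set.mem_add] at hw
      obtain ⟨u, hu, v, hv, rfl⟩ := hw
      have hP := P u hu v hv
      have h1 := T1 (g1 x0) (mem_image_of_mem _ hx0) u hu
      have h2 := T2 (g2 x0) (mem_image_of_mem _ hx0) v hv
      rw [hBsub] at h1 h2
      have hBuv := hBadd u v
      linarith
  · rintro ⟨B, hBadd, lam1, lam2, hf, hG⟩ x hx y hy
    obtain ⟨hf1, -⟩ := hf x hx
    obtain ⟨-, hf2⟩ := hf y hy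
    have hF := hFaff x hx y hy
    have hGv := hG (g1 x + g2 y)
      (Set.add_mem_add (mem_image_of_mem _ hx) (mem_image_of_mem _ hy))
    rw [hGv, hBadd, hf1, hf2, hF]
    ring
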